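/- Let A₀, …, A_n be locally traceable bounded operators on a Hilbert space L²(E) over a metric space M partitioned into measurable sets {V_y}_{y∈Y}. Define χ(A₀ ⊗ ⋯ ⊗ A_n)(y₀,…,y_n) := (1/(n+1)!) Σ_{σ∈S_{n+1}} sgn(σ) tr(A₀ P_{y_{σ(0)}} ⋯ A_n P_{y_{σ(n)}}), where P_y is multiplication by the characteristic function of V_y. Then χ satisfies the cyclic symmetry χ(A₀ ⊗ ⋯ ⊗ A_n) = (−1)^n χ(A_n ⊗ A₀ ⊗ ⋯ ⊗ A_{n−1}). -/
import Mathlib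

private lemma tau_rot {H : Type*} [NormedAddCommGroup H] [NormedSpace ℂ H]
    (τ : (H →L[ℂ] H) →ₗ[ℂ] ℂ)
    (htr : ∀ S T : H →L[ℂ] H, τ (S * T) = τ (T * S))
    {n : ℕ} (f : Fin (n + 1) → (H →L[ℂ] H)) :
    τ ((List.ofFn fun i => f (i + 1)).prod) = τ ((List.ofFn f).prod) := by
  have h1 : (List.ofFn f).prod = f 0 * (List.ofFn fun i : Fin n => f i.succ).prod := by
    rw [List.ofFn_succ, List.prod_cons]
  have h2 : (List.ofFn fun i : Fin (n+1) => f (i + 1)).prod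
      = (List.ofFn fun i : Fin n => f i.succ).prod * f 0 := by
    rw [List.ofFn_succ' (fun i : Fin (n+1) => f (i+1))]
    simp only [List.concat_eq_append, List.prod_append, List.prod_cons, List.prod_nil, mul_one]
    simp only [Fin.coeSucc_eq_succ, Fin.last_add_one]
  rw [h1, h2, htr]


/-- The rough character cochain
`χ(A₀ ⊗ ⋯ ⊗ A_m)(y₀, …, y_m) = (1/(m+1)!) ∑_{σ} sgn(σ) tr(A₀ P_{y_{σ(0)}} ⋯ A_m P_{y_{σ(m)}})`,
where `P_y` is the multiplication operator by the characteristic function of `V_y` and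
`τ` plays the role of the trace. -/
noncomputable def chi {H : Type*} [NormedAddCommGroup H] [NormedSpace ℂ H] {Y : Type*}
    (τ : (H →L[ℂ] H) →ₗ[ℂ] ℂ) (P : Y → (H →L[ℂ] H)) {m : ℕ}
    (A : Fin (m + 1) → (H →L[ℂ] H)) (y : Fin (m + 1) → Y) : ℂ :=
  ((Nat.factorial (m + 1) : ℂ))⁻¹ *
    ∑ σ : Equiv.Perm (Fin (m + 1)),
      ((Equiv.Perm.sign σ : ℤ) : ℂ) * τ ((List.ofFn fun i => A i * P (y (σ i))).prod)

/-- cyclic symmetry of the rough character.  If `τ` has the trace property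
and the `P_y` are commuting idempotents (multiplications by characteristic functions of a
partition), then `χ(A₀ ⊗ ⋯ ⊗ A_n) = (−1)ⁿ χ(A_n ⊗ A₀ ⊗ ⋯ ⊗ A_{n−1})`. -/
theorem chi_cyclic_symmetry
    {H : Type*} [NormedAddCommGroup H] [NormedSpace ℂ H] {Y : Type*}
    (τ : (H →L[ℂ] H) →ₗ[ℂ] ℂ)
    (htr : ∀ S T : H →L[ℂ] H, τ (S * T) = τ (T * S))
    (P : Y → (H →L[ℂ] H))
    (hP : ∀ y, IsIdempotentElem (P y))
    (hPcomm : ∀ y y', Commute (P y) (P y'))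
    (n : ℕ) (A : Fin (n + 1) → (H →L[ℂ] H)) (y : Fin (n + 1) → Y) :
    chi τ P A y = (-1 : ℂ) ^ n * chi τ P (fun i => A (i - 1)) y := by
  simp only [chi]
  set c : Equiv.Perm (Fin (n + 1)) := finRotate (n + 1) with hc
  have hsum : ∑ σ : Equiv.Perm (Fin (n + 1)),
      ((Equiv.Perm.sign σ : ℤ) : ℂ) * τ ((List.ofFn fun i => A (i - 1) * P (y (σ i))).prod)
      = (-1 : ℂ) ^ n * ∑ σ : Equiv.Perm (Fin (n + 1)),
        ((Equiv.Perm.sign σ : ℤ) : ℂ) * τ ((List.ofFn fun i => A i * P (y (σ i))).prod) := by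
    rw [Finset.mul_sum]
    rw [← Equiv.sum_comp (Equiv.mulRight c⁻¹) (fun σ : Equiv.Perm (Fin (n+1)) =>
      ((Equiv.Perm.sign σ : ℤ) : ℂ) * τ ((List.ofFn fun i => A (i - 1) * P (y (σ i))).prod))]
    refine Finset.sum_congr rfl fun σ _ => ?_
    have hkey : τ ((List.ofFn fun i => A (i - 1) * P (y ((σ * c⁻¹) i))).prod)
        = τ ((List.ofFn fun i => A i * P (y (σ i))).prod) := by
      have := tau_rot τ htr (fun i => A (i - 1) * P (y ((σ * c⁻¹) i)))
      simp only [add_sub_cancel_right] at this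
      rw [← this]
      have hcinv : ∀ i : Fin (n + 1), (σ * c⁻¹) (i + 1) = σ i := by
        intro i
        have : c⁻¹ (i + 1) = i := by
          rw [Equiv.Perm.inv_eq_iff_eq, hc, finRotate_succ_apply]
        simp [Equiv.Perm.mul_apply, this]
      simp only [hcinv]
    have hsgn : ((Equiv.Perm.sign (σ * c⁻¹) : ℤ) : ℂ) = (-1 : ℂ) ^ n * ((Equiv.Perm.sign σ : ℤ) : ℂ) := by
      rw [map_mul, Equiv.Perm.sign_inv, hc, sign_finRotate]
      push_cast
      ring
    simp only [Equiv.coe_mulRight, hkey, hsgn]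
    ring
  rw [hsum]
  have h2 : (-1 : ℂ) ^ n * (-1 : ℂ) ^ n = 1 := by
    rw [← pow_add, Even.neg_one_pow ⟨n, rfl⟩]
  calc _ = ((-1:ℂ)^n * (-1:ℂ)^n) * (((Nat.factorial (n + 1) : ℂ))⁻¹ *
        ∑ σ : Equiv.Perm (Fin (n + 1)),
          ((Equiv.Perm.sign σ : ℤ) : ℂ) * τ ((List.ofFn fun i => A i * P (y (σ i))).prod)) := by
        rw [h2, one_mul]
    _ = _ := by ring
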